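/- On the cotangent bundle of the unit sphere realized by x, π ∈ ℝ³ with |x| = 1, ⟨x,π⟩ = 0, {π_i, x_j} = δ_{ij} − x_i x_j (Dirac bracket), the two functions H̃₁ = ¼⟨J,J⟩ − ⟨x,Bx⟩(γ + δ⟨x,Bx⟩) + δ⟨x,A^∨x⟩ and H̃₂ = −¼⟨J,AJ⟩ + ⟨x,A^∨x⟩(γ + δ⟨x,Bx⟩), where J = π×x, are in involution: {H̃₁, H̃₂} = 0. -/

import Mathlib

open scoped BigOperators

abbrev V3 := Fin 3 → ℝ
abbrev Ph := V3 × V3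

noncomputable def eps (i j k : Fin 3) : ℝ :=
  (((j : ℤ) - (i : ℤ)) * ((k : ℤ) - (j : ℤ)) * ((k : ℤ) - (i : ℤ)) : ℤ) / 2

def dot (u v : V3) : ℝ := ∑ i, u i * v i

def cross (u v : V3) : V3 :=
  ![u 1 * v 2 - u 2 * v 1, u 2 * v 0 - u 0 * v 2, u 0 * v 1 - u 1 * v 0]

/-- derivative in the direction of the i-th coordinate of the first factor -/
noncomputable def Dp (i : Fin 3) (F : Ph → ℝ) (z : Ph) : ℝ :=
  fderiv ℝ F z (Pi.single i 1, 0)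

/-- derivative in the direction of the i-th coordinate of the second factor -/
noncomputable def DM (i : Fin 3) (F : Ph → ℝ) (z : Ph) : ℝ :=
  fderiv ℝ F z (0, Pi.single i 1)

/-- e(3) Lie–Poisson bracket on functions of z = (p, M):
{M_i,M_j} = ε_{ijk} M_k, {M_i,p_j} = ε_{ijk} p_k, {p_i,p_j} = 0. -/
noncomputable def pb1 (F G : Ph → ℝ) (z : Ph) : ℝ :=
  ∑ i, ∑ j, ∑ k, eps i j k *
    ( z.2 k * DM i F z * DM j G z
    + z.1 k * (DM i F z * Dp j G z + Dp i F z * DM j G z) )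
/-- H̃₁ = ¼⟨J,J⟩ − ⟨x,Bx⟩(γ + δ⟨x,Bx⟩) + δ⟨x,A^∨x⟩ with
A = diag(a₁,a₂,a₃), B = diag(a₂+a₃,a₃+a₁,a₁+a₂), A^∨ = diag(a₂a₃,a₃a₁,a₁a₂);
here z = (x, J). -/
noncomputable def Ht1 (a : Fin 3 → ℝ) (γ δ : ℝ) (z : Ph) : ℝ :=
  (1/4) * dot z.2 z.2
  - dot z.1 (fun i => (a (i+1) + a (i+2)) * z.1 i) *
      (γ + δ * dot z.1 (fun i => (a (i+1) + a (i+2)) * z.1 i))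
  + δ * dot z.1 (fun i => (a (i+1) * a (i+2)) * z.1 i)

/-- H̃₂ = −¼⟨J,AJ⟩ + ⟨x,A^∨x⟩(γ + δ⟨x,Bx⟩). -/
noncomputable def Ht2 (a : Fin 3 → ℝ) (γ δ : ℝ) (z : Ph) : ℝ :=
  -(1/4) * dot z.2 (fun i => a i * z.2 i)
  + dot z.1 (fun i => (a (i+1) * a (i+2)) * z.1 i) *
      (γ + δ * dot z.1 (fun i => (a (i+1) + a (i+2)) * z.1 i))

noncomputable def cP (i : Fin 3) : Ph →L[ℝ] ℝ :=
  (ContinuousLinearMap.proj i).comp (ContinuousLinearMap.fst ℝ V3 V3)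
noncomputable def cM (i : Fin 3) : Ph →L[ℝ] ℝ :=
  (ContinuousLinearMap.proj i).comp (ContinuousLinearMap.snd ℝ V3 V3)
lemma hP (i : Fin 3) (z : Ph) : HasFDerivAt (fun z : Ph => z.1 i) (cP i) z :=
  (cP i).hasFDerivAt
lemma hM (i : Fin 3) (z : Ph) : HasFDerivAt (fun z : Ph => z.2 i) (cM i) z :=
  (cM i).hasFDerivAt

lemma Ht1_eq (a : Fin 3 → ℝ) (γ δ : ℝ) : Ht1 a γ δ = fun z : Ph =>
    (1/4) * (z.2 0 * z.2 0 + z.2 1 * z.2 1 + z.2 2 * z.2 2)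
    - ((a 1 + a 2) * (z.1 0 * z.1 0) + (a 2 + a 0) * (z.1 1 * z.1 1)
        + (a 0 + a 1) * (z.1 2 * z.1 2)) *
      (γ + δ * ((a 1 + a 2) * (z.1 0 * z.1 0) + (a 2 + a 0) * (z.1 1 * z.1 1)
        + (a 0 + a 1) * (z.1 2 * z.1 2)))
    + δ * ((a 1 * a 2) * (z.1 0 * z.1 0) + (a 2 * a 0) * (z.1 1 * z.1 1)
        + (a 0 * a 1) * (z.1 2 * z.1 2)) := by
  funext z
  simp only [Ht1, dot, Fin.sum_univ_three,
    show ((0:Fin 3)+1)=1 from rfl, show ((0:Fin 3)+2)=2 from rfl,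
    show ((1:Fin 3)+1)=2 from rfl, show ((1:Fin 3)+2)=0 from rfl,
    show ((2:Fin 3)+1)=0 from rfl, show ((2:Fin 3)+2)=1 from rfl]
  ring

lemma Ht2_eq (a : Fin 3 → ℝ) (γ δ : ℝ) : Ht2 a γ δ = fun z : Ph =>
    (-(1/4)) * (a 0 * (z.2 0 * z.2 0) + a 1 * (z.2 1 * z.2 1) + a 2 * (z.2 2 * z.2 2))
    + ((a 1 * a 2) * (z.1 0 * z.1 0) + (a 2 * a 0) * (z.1 1 * z.1 1)
        + (a 0 * a 1) * (z.1 2 * z.1 2)) *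
      (γ + δ * ((a 1 + a 2) * (z.1 0 * z.1 0) + (a 2 + a 0) * (z.1 1 * z.1 1)
        + (a 0 + a 1) * (z.1 2 * z.1 2))) := by
  funext z
  simp only [Ht2, dot, Fin.sum_univ_three,
    show ((0:Fin 3)+1)=1 from rfl, show ((0:Fin 3)+2)=2 from rfl,
    show ((1:Fin 3)+1)=2 from rfl, show ((1:Fin 3)+2)=0 from rfl,
    show ((2:Fin 3)+1)=0 from rfl, show ((2:Fin 3)+2)=1 from rfl]
  ring

lemma Dp_Ht1 (a : Fin 3 → ℝ) (γ δ : ℝ) (z : Ph) (i : Fin 3) :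
    Dp i (Ht1 a γ δ) z =
      -(γ + 2 * δ * ((a 1 + a 2) * (z.1 0 * z.1 0) + (a 2 + a 0) * (z.1 1 * z.1 1)
        + (a 0 + a 1) * (z.1 2 * z.1 2))) * (2 * (a (i+1) + a (i+2)) * z.1 i)
      + δ * (2 * (a (i+1) * a (i+2)) * z.1 i) := by
  rw [Dp, Ht1_eq]
  erw [(show HasFDerivAt _ _ z from
    (((((hM 0 z).mul (hM 0 z)).add ((hM 1 z).mul (hM 1 z))).add
        ((hM 2 z).mul (hM 2 z))).const_mul (1/4)
      |>.sub (((((hP 0 z).mul (hP 0 z)).const_mul (a 1 + a 2)).add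
          (((hP 1 z).mul (hP 1 z)).const_mul (a 2 + a 0))).add
          (((hP 2 z).mul (hP 2 z)).const_mul (a 0 + a 1))
        |>.mul ((((((hP 0 z).mul (hP 0 z)).const_mul (a 1 + a 2)).add
          (((hP 1 z).mul (hP 1 z)).const_mul (a 2 + a 0))).add
          (((hP 2 z).mul (hP 2 z)).const_mul (a 0 + a 1))
          |>.const_mul δ |>.const_add γ)))).add
      (((((hP 0 z).mul (hP 0 z)).const_mul (a 1 * a 2)).add
          (((hP 1 z).mul (hP 1 z)).const_mul (a 2 * a 0))).add
          (((hP 2 z).mul (hP 2 z)).const_mul (a 0 * a 1))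
        |>.const_mul δ)).fderiv]
  fin_cases i <;>
    simp [cP, cM, Pi.single_apply] <;> ring

lemma DM_Ht1 (a : Fin 3 → ℝ) (γ δ : ℝ) (z : Ph) (i : Fin 3) :
    DM i (Ht1 a γ δ) z = (1/2) * z.2 i := by
  rw [DM, Ht1_eq]
  erw [(show HasFDerivAt _ _ z from
    (((((hM 0 z).mul (hM 0 z)).add ((hM 1 z).mul (hM 1 z))).add
        ((hM 2 z).mul (hM 2 z))).const_mul (1/4)
      |>.sub (((((hP 0 z).mul (hP 0 z)).const_mul (a 1 + a 2)).add
          (((hP 1 z).mul (hP 1 z)).const_mul (a 2 + a 0))).add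
          (((hP 2 z).mul (hP 2 z)).const_mul (a 0 + a 1))
        |>.mul ((((((hP 0 z).mul (hP 0 z)).const_mul (a 1 + a 2)).add
          (((hP 1 z).mul (hP 1 z)).const_mul (a 2 + a 0))).add
          (((hP 2 z).mul (hP 2 z)).const_mul (a 0 + a 1))
          |>.const_mul δ |>.const_add γ)))).add
      (((((hP 0 z).mul (hP 0 z)).const_mul (a 1 * a 2)).add
          (((hP 1 z).mul (hP 1 z)).const_mul (a 2 * a 0))).add
          (((hP 2 z).mul (hP 2 z)).const_mul (a 0 * a 1))
        |>.const_mul δ)).fderiv]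
  fin_cases i <;>
    simp [cP, cM, Pi.single_apply] <;> ring

lemma Dp_Ht2 (a : Fin 3 → ℝ) (γ δ : ℝ) (z : Ph) (i : Fin 3) :
    Dp i (Ht2 a γ δ) z =
      (γ + δ * ((a 1 + a 2) * (z.1 0 * z.1 0) + (a 2 + a 0) * (z.1 1 * z.1 1)
        + (a 0 + a 1) * (z.1 2 * z.1 2))) * (2 * (a (i+1) * a (i+2)) * z.1 i)
      + ((a 1 * a 2) * (z.1 0 * z.1 0) + (a 2 * a 0) * (z.1 1 * z.1 1)
        + (a 0 * a 1) * (z.1 2 * z.1 2)) *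
          (δ * (2 * (a (i+1) + a (i+2)) * z.1 i)) := by
  rw [Dp, Ht2_eq]
  erw [(show HasFDerivAt _ _ z from
    ((((((hM 0 z).mul (hM 0 z)).const_mul (a 0)).add
        (((hM 1 z).mul (hM 1 z)).const_mul (a 1))).add
        (((hM 2 z).mul (hM 2 z)).const_mul (a 2))).const_mul (-(1/4))
      |>.add (((((hP 0 z).mul (hP 0 z)).const_mul (a 1 * a 2)).add
          (((hP 1 z).mul (hP 1 z)).const_mul (a 2 * a 0))).add
          (((hP 2 z).mul (hP 2 z)).const_mul (a 0 * a 1))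
        |>.mul ((((((hP 0 z).mul (hP 0 z)).const_mul (a 1 + a 2)).add
          (((hP 1 z).mul (hP 1 z)).const_mul (a 2 + a 0))).add
          (((hP 2 z).mul (hP 2 z)).const_mul (a 0 + a 1))
          |>.const_mul δ |>.const_add γ))))).fderiv]
  fin_cases i <;>
    simp [cP, cM, Pi.single_apply] <;> ring

lemma DM_Ht2 (a : Fin 3 → ℝ) (γ δ : ℝ) (z : Ph) (i : Fin 3) :
    DM i (Ht2 a γ δ) z = (-(1/2)) * (a i * z.2 i) := by
  rw [DM, Ht2_eq]
  erw [(show HasFDerivAt _ _ z from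
    ((((((hM 0 z).mul (hM 0 z)).const_mul (a 0)).add
        (((hM 1 z).mul (hM 1 z)).const_mul (a 1))).add
        (((hM 2 z).mul (hM 2 z)).const_mul (a 2))).const_mul (-(1/4))
      |>.add (((((hP 0 z).mul (hP 0 z)).const_mul (a 1 * a 2)).add
          (((hP 1 z).mul (hP 1 z)).const_mul (a 2 * a 0))).add
          (((hP 2 z).mul (hP 2 z)).const_mul (a 0 * a 1))
        |>.mul ((((((hP 0 z).mul (hP 0 z)).const_mul (a 1 + a 2)).add
          (((hP 1 z).mul (hP 1 z)).const_mul (a 2 + a 0))).add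
          (((hP 2 z).mul (hP 2 z)).const_mul (a 0 + a 1))
          |>.const_mul δ |>.const_add γ))))).fderiv]
  fin_cases i <;>
    simp [cP, cM, Pi.single_apply] <;> ring

lemma eps_aab (i k : Fin 3) : eps i i k = 0 := by simp [eps]
lemma eps_abb (i j : Fin 3) : eps i j j = 0 := by simp [eps]
lemma eps_aba (i j : Fin 3) : eps i j i = 0 := by simp [eps]
lemma eps012 : eps 0 1 2 = 1 := by norm_num [eps]
lemma eps120 : eps 1 2 0 = 1 := by norm_num [eps]
lemma eps201 : eps 2 0 1 = 1 := by norm_num [eps]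
lemma eps021 : eps 0 2 1 = -1 := by norm_num [eps]
lemma eps102 : eps 1 0 2 = -1 := by norm_num [eps]
lemma eps210 : eps 2 1 0 = -1 := by norm_num [eps]

/-- On the symplectic leaf |x| = 1, ⟨x,J⟩ = 0 of e(3) (with coordinates (x,J),
J = π×x realizing T*S²), the Hamiltonians H̃₁ and H̃₂ are in involution. -/
theorem sphere_hamiltonians_involution (a : Fin 3 → ℝ) (γ δ : ℝ) (z : Ph)
    (hx : dot z.1 z.1 = 1) (hxJ : dot z.1 z.2 = 0) :
    pb1 (Ht1 a γ δ) (Ht2 a γ δ) z = 0 := by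
  simp only [dot, Fin.sum_univ_three] at hx hxJ
  simp only [pb1, Fin.sum_univ_three, Dp_Ht1, DM_Ht1, Dp_Ht2, DM_Ht2,
    eps_aab, eps_abb, eps_aba, eps012, eps120, eps201, eps021, eps102, eps210,
    show ((0:Fin 3)+1)=1 from rfl, show ((0:Fin 3)+2)=2 from rfl,
    show ((1:Fin 3)+1)=2 from rfl, show ((1:Fin 3)+2)=0 from rfl,
    show ((2:Fin 3)+1)=0 from rfl, show ((2:Fin 3)+2)=1 from rfl]
  linear_combination
    (δ * ((a 0)^2 * (a 1 - a 2) * z.1 1 * z.1 2 * z.2 0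
        + (a 1)^2 * (a 2 - a 0) * z.1 0 * z.1 2 * z.2 1
        + (a 2)^2 * (a 0 - a 1) * z.1 0 * z.1 1 * z.2 2)) * hx
    + (δ * z.1 0 * z.1 1 * z.1 2 *
        (a 1 * (a 2)^2 - (a 1)^2 * a 2 - a 0 * (a 2)^2 + a 0 * (a 1)^2
          + (a 0)^2 * a 2 - (a 0)^2 * a 1)) * hxJ
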